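/- After the decomposition algorithm with parameter d > 1 completes, every refined segment [b, e] in RS[c] overlaps at most d refined segments of RS[c'], where c' = φ_e(c) > 0. -/

import Mathlib

/-- `Partitions L x y`: the list `L` of (nonempty, sorted, consecutive) integer
intervals partitions `[x, y]`. -/
def Partitions : List (ℕ × ℕ) → ℕ → ℕ → Prop
  | [], x, y => y + 1 = x
  | (b, e) :: t, x, y => b = x ∧ b ≤ e ∧ Partitions t (e + 1) y

/-- Number of intervals in `L` overlapping (nonempty intersection with) `[b, e]`. -/
def overlapCnt (b e : ℕ) (L : List (ℕ × ℕ)) : ℕ :=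
  (L.filter (fun p => decide (p.1 ≤ e ∧ b ≤ p.2))).length

lemma overlapCnt_append (b e : ℕ) (L1 L2 : List (ℕ × ℕ)) :
    overlapCnt b e (L1 ++ L2) = overlapCnt b e L1 + overlapCnt b e L2 := by
  simp [overlapCnt, List.filter_append]

lemma partitions_le {L : List (ℕ × ℕ)} {x y : ℕ} (h : Partitions L x y) : x ≤ y + 1 := by
  induction L generalizing x with
  | nil => simp only [Partitions] at h; omega
  | cons p t ih =>
    obtain ⟨b0, e0⟩ := p
    obtain ⟨rfl, h1, h2⟩ := h
    have := ih h2
    omega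

lemma partitions_bounds {L : List (ℕ × ℕ)} {x y : ℕ} (h : Partitions L x y) :
    ∀ p ∈ L, x ≤ p.1 ∧ p.1 ≤ p.2 ∧ p.2 ≤ y := by
  induction L generalizing x with
  | nil => simp
  | cons q t ih =>
    obtain ⟨b0, e0⟩ := q
    obtain ⟨rfl, h1, h2⟩ := h
    intro p hp
    rcases List.mem_cons.mp hp with rfl | hp
    · exact ⟨le_rfl, h1, by have := partitions_le h2; omega⟩
    · have := ih h2 p hp
      omega

lemma partitions_of_append {L1 L2 : List (ℕ × ℕ)} {x z y : ℕ} (h1 : Partitions L1 x z)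
    (h : Partitions (L1 ++ L2) x y) : Partitions L2 (z + 1) y := by
  induction L1 generalizing x with
  | nil =>
    have hx : z + 1 = x := h1
    rw [hx]
    exact h
  | cons q t ih =>
    obtain ⟨b0, e0⟩ := q
    obtain ⟨rfl, _, h2⟩ := h1
    obtain ⟨_, _, h3⟩ := h
    exact ih h2 h3

lemma overlapCnt_eq_zero_of_lo {b e : ℕ} {L : List (ℕ × ℕ)} (h : ∀ p ∈ L, e < p.1) :
    overlapCnt b e L = 0 := by
  unfold overlapCnt
  rw [List.length_eq_zero_iff, List.filter_eq_nil_iff]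
  intro p hp
  simp only [decide_eq_true_eq]
  have := h p hp
  omega

lemma overlapCnt_eq_zero_of_hi {b e : ℕ} {L : List (ℕ × ℕ)} (h : ∀ p ∈ L, p.2 < b) :
    overlapCnt b e L = 0 := by
  unfold overlapCnt
  rw [List.length_eq_zero_iff, List.filter_eq_nil_iff]
  intro p hp
  simp only [decide_eq_true_eq]
  have := h p hp
  omega

lemma overlapCnt_congr {b j j' : ℕ} {L : List (ℕ × ℕ)} (h : ∀ p ∈ L, p.1 ≤ j)
    (hjj : j ≤ j') : overlapCnt b j' L = overlapCnt b j L := by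
  unfold overlapCnt
  congr 1
  apply List.filter_congr
  intro p hp
  have := h p hp
  simp only [decide_eq_decide]
  constructor
  · rintro ⟨_, h2⟩; exact ⟨by omega, h2⟩
  · rintro ⟨_, h2⟩; exact ⟨by omega, h2⟩

lemma overlapCnt_le_one {S : List (ℕ × ℕ)} {x y b e : ℕ} (h : Partitions S x y)
    (hall : ∀ p ∈ S, e ≤ p.2) : overlapCnt b e S ≤ 1 := by
  cases S with
  | nil => simp [overlapCnt]
  | cons q t =>
    obtain ⟨b0, e0⟩ := q
    obtain ⟨rfl, h1, h2⟩ := h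
    have he0 : e ≤ e0 := hall (b0, e0) List.mem_cons_self
    have ht : overlapCnt b e t = 0 :=
      overlapCnt_eq_zero_of_lo (fun p hp => by
        have := (partitions_bounds h2 p hp).1; omega)
    have hsplit : ((b0, e0) :: t) = [(b0, e0)] ++ t := rfl
    rw [hsplit, overlapCnt_append, ht]
    have : overlapCnt b e [(b0, e0)] ≤ 1 := by
      unfold overlapCnt
      exact List.length_filter_le _ _
    omega

lemma overlapCnt_diag_le_one {L : List (ℕ × ℕ)} {x y j : ℕ} (h : Partitions L x y) :
    overlapCnt j j L ≤ 1 := by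
  induction L generalizing x with
  | nil => simp [overlapCnt]
  | cons q t ih =>
    obtain ⟨b0, e0⟩ := q
    obtain ⟨rfl, h1, h2⟩ := h
    have hsplit : ((b0, e0) :: t) = [(b0, e0)] ++ t := rfl
    rw [hsplit, overlapCnt_append]
    by_cases hje : j ≤ e0
    · have ht : overlapCnt j j t = 0 :=
        overlapCnt_eq_zero_of_lo (fun p hp => by
          have := (partitions_bounds h2 p hp).1; omega)
      have : overlapCnt j j [(b0, e0)] ≤ 1 := by
        unfold overlapCnt
        exact List.length_filter_le _ _
      omega
    · have hh : overlapCnt j j [(b0, e0)] = 0 :=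
        overlapCnt_eq_zero_of_hi (fun p hp => by
          simp at hp; subst hp; simpa using by omega)
      have := ih h2
      omega

/-- Overlap constraint after completion.  `A t` is the state of `RS[c']`
(`c' = φ_e(c)`, constant on `[b, e]`) at column `t`, partitioning a prefix
`[1, y t]` with `y t ≤ t`; earlier states are prefixes of later ones and every
segment is present at the column of its right endpoint.  If the refined segment
`[b, e]` is created at column `e` (so, `[b, ·]` being pending before column `e`,
no earlier exact-`d` overlap occurred: `htrig`), then after the algorithm has
processed all `m` columns, `[b, e]` overlaps at most `d` refined segments of the
final state `A m` of `RS[c']`. -/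
theorem stmt10 (d b e m : ℕ) (A : ℕ → List (ℕ × ℕ)) (y : ℕ → ℕ)
    (hpart : ∀ t, Partitions (A t) 1 (y t)) (hy : ∀ t, y t ≤ t)
    (hpre : ∀ t t', t ≤ t' → A t <+: A t')
    (happ : ∀ t, ∀ p ∈ A t, p ∈ A p.2)
    (hd : 1 < d) (hb1 : 1 ≤ b) (hbe : b ≤ e) (hem : e ≤ m)
    (htrig : ∀ j', b ≤ j' → j' < e → overlapCnt b j' (A j') ≠ d) :
    overlapCnt b e (A m) ≤ d := by
  have key : ∀ t t' : ℕ, t ≤ t' → ∃ S, A t' = A t ++ S ∧ Partitions S (y t + 1) (y t') := by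
    intro t t' h
    obtain ⟨S, hS⟩ := hpre t t' h
    refine ⟨S, hS.symm, partitions_of_append (hpart t) ?_⟩
    rw [hS]; exact hpart t'
  have fresh : ∀ t t' : ℕ, t ≤ t' → ∀ S, A t' = A t ++ S → Partitions S (y t + 1) (y t') →
      ∀ p ∈ S, t + 1 ≤ p.2 := by
    intro t t' htt S hS hSp p hp
    by_contra hc
    push_neg at hc
    have h2 : p.2 ≤ t := by omega
    have hmem : p ∈ A t' := by rw [hS]; exact List.mem_append_right _ hp
    have hp2 : p ∈ A p.2 := happ t' p hmem
    have hpt : p ∈ A t := (hpre p.2 t h2).subset hp2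
    have b1 := partitions_bounds (hpart t) p hpt
    have b2 := partitions_bounds hSp p hp
    omega
  have step : ∀ j : ℕ, overlapCnt b (j + 1) (A (j + 1)) ≤ overlapCnt b j (A j) + 1 := by
    intro j
    obtain ⟨S, hS, hSp⟩ := key j (j + 1) (Nat.le_succ j)
    have hall : ∀ p ∈ S, j + 1 ≤ p.2 := fresh j (j + 1) (Nat.le_succ j) S hS hSp
    have h1 : overlapCnt b (j + 1) S ≤ 1 := overlapCnt_le_one hSp (fun p hp => hall p hp)
    have h2 : overlapCnt b (j + 1) (A j) = overlapCnt b j (A j) :=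
      overlapCnt_congr (fun p hp => by
        have := partitions_bounds (hpart j) p hp
        have := hy j; omega) (Nat.le_succ j)
    rw [hS, overlapCnt_append, h2]
    omega
  have main : ∀ j : ℕ, b ≤ j → j ≤ e →
      overlapCnt b j (A j) ≤ d ∧ (j < e → overlapCnt b j (A j) < d) := by
    intro j hbj
    induction j, hbj using Nat.le_induction with
    | base =>
      intro _
      have h1 : overlapCnt b b (A b) ≤ 1 := overlapCnt_diag_le_one (hpart b)
      exact ⟨by omega, fun _ => by omega⟩
    | succ j hbj ih =>
      intro hje
      have hlt : j < e := by omega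
      have hjd : overlapCnt b j (A j) < d := (ih (by omega)).2 hlt
      have hst := step j
      refine ⟨by omega, fun hlt' => ?_⟩
      have := htrig (j + 1) (by omega) hlt'
      omega
  obtain ⟨S, hS, hSp⟩ := key e m hem
  have hall : ∀ p ∈ S, e + 1 ≤ p.2 := fresh e m hem S hS hSp
  rw [hS, overlapCnt_append]
  by_cases hye : y e = e
  · have h0 : overlapCnt b e S = 0 :=
      overlapCnt_eq_zero_of_lo (fun p hp => by
        have := partitions_bounds hSp p hp; omega)
    have := (main e hbe le_rfl).1
    omega
  · have hyelt : y e < e := lt_of_le_of_ne (hy e) hye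
    have h1 : overlapCnt b e S ≤ 1 :=
      overlapCnt_le_one hSp (fun p hp => by have := hall p hp; omega)
    have h2 : overlapCnt b e (A e) < d := by
      rcases eq_or_lt_of_le hbe with rfl | hbe'
      · have h0 : overlapCnt b b (A b) = 0 :=
          overlapCnt_eq_zero_of_hi (fun p hp => by
            have := partitions_bounds (hpart b) p hp; omega)
        omega
      · obtain ⟨j, rfl⟩ : ∃ j, e = j + 1 := ⟨e - 1, by omega⟩
        obtain ⟨S', hS', hSp'⟩ := key j (j + 1) (Nat.le_succ j)
        have hall' : ∀ p ∈ S', j + 1 ≤ p.2 := fresh j (j + 1) (Nat.le_succ j) S' hS' hSp'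
        have hnil : S' = [] := by
          cases S' with
          | nil => rfl
          | cons q t =>
            exfalso
            have hb := partitions_bounds hSp' q List.mem_cons_self
            have := hall' q List.mem_cons_self
            omega
        rw [hnil, List.append_nil] at hS'
        rw [hS']
        have hco : overlapCnt b (j + 1) (A j) = overlapCnt b j (A j) :=
          overlapCnt_congr (fun p hp => by
            have := partitions_bounds (hpart j) p hp
            have := hy j; omega) (Nat.le_succ j)
        rw [hco]
        exact (main j (by omega) (by omega)).2 (by omega)
    omega
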